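/- arXiv:2412.20408 — 2 statements merged into one kernel-verified Lean document; each statement's English description precedes it below -/
import Mathlib

section
/- For every dimension d ≥ 1 and every α ∈ (0,2), the constant c₀(d,α) := ∫_{ℝ^d} (1 − cos z₁)/|z|^{d+α} dz equals π^{d/2}·|Γ(−α/2)| / (2^α · Γ((d+α)/2)), where Γ is the Gamma function. -/
open MeasureTheory Real Set Filter
open scoped RealInnerProductSpace ENNReal

lemma meas_rpow_aux (c : ℝ) : Measurable (fun x : ℝ => x ^ c) := by measurability


lemma aux_exp_le_one {x : ℝ} (hx : 0 ≤ x) : rexp (-x) ≤ 1 := by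
  simpa using Real.exp_le_exp.mpr (neg_nonpos.mpr hx)

lemma aux_one_sub_exp_le {x : ℝ} : 1 - rexp (-x) ≤ x := by
  nlinarith [Real.add_one_le_exp (-x)]

lemma intK {a : ℝ} (h0 : 0 < a) (h1 : a < 1) :
    ∫ x in Ioi (0:ℝ), (1 - rexp (-x)) * x ^ (-a - 1) = Real.Gamma (1 - a) / a := by
  have h1a : 0 < 1 - a := by linarith
  have hu : ∀ x ∈ Ioi (0:ℝ), HasDerivAt (fun x => 1 - rexp (-x)) (rexp (-x)) x := by
    intro x _
    simpa using ((Real.hasDerivAt_exp (-x)).comp x (hasDerivAt_neg x)).const_sub 1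
  have hv : ∀ x ∈ Ioi (0:ℝ), HasDerivAt (fun x => -x ^ (-a) / a) (x ^ (-a - 1)) x := by
    intro x hx
    have := (Real.hasDerivAt_rpow_const (x := x) (p := -a) (Or.inl (ne_of_gt hx))).neg.div_const a
    convert this using 1
    · rfl
    · rfl
    · rfl
    rw [eq_div_iff h0.ne']; ring
  have hGamma : IntegrableOn (fun x => rexp (-x) * x ^ ((1-a) - 1)) (Ioi (0:ℝ)) :=
    Real.GammaIntegral_convergent h1a
  have hu'v : IntegrableOn (fun x => rexp (-x) * (-x ^ (-a) / a)) (Ioi (0:ℝ)) := by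
    have : (fun x : ℝ => rexp (-x) * (-x ^ (-a) / a)) =
        fun x => (-a⁻¹) * (rexp (-x) * x ^ ((1-a)-1)) := by
      funext x; rw [show (1:ℝ)-a-1 = -a by ring]; ring
    rw [this]
    exact hGamma.const_mul _
  have hmeas : ∀ s : Set ℝ, AEStronglyMeasurable (fun x : ℝ => (1 - rexp (-x)) * x ^ (-a-1))
      (volume.restrict s) := by
    intro s
    apply Measurable.aestronglyMeasurable
    exact (measurable_const.sub (measurable_id.neg.exp)).mul (by measurability)
  have huv' : IntegrableOn (fun x => (1 - rexp (-x)) * x ^ (-a - 1)) (Ioi (0:ℝ)) := by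
    rw [← Ioc_union_Ioi_eq_Ioi (le_of_lt one_pos)]
    apply IntegrableOn.union
    · -- on Ioc 0 1, bound by x ^ (-a)
      have hg : IntegrableOn (fun x : ℝ => x ^ (-a)) (Ioc (0:ℝ) 1) := by
        rw [integrableOn_Ioc_iff_integrableOn_Ioo, intervalIntegral.integrableOn_Ioo_rpow_iff one_pos]
        linarith
      apply Integrable.mono hg (hmeas _)
      filter_upwards [ae_restrict_mem measurableSet_Ioc] with x hx
      have hx0 : 0 < x := hx.1
      rw [Real.norm_eq_abs, Real.norm_eq_abs, abs_of_nonneg (Real.rpow_nonneg hx0.le _),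
        abs_of_nonneg (mul_nonneg (by nlinarith [aux_exp_le_one hx0.le]) (Real.rpow_nonneg hx0.le _))]
      calc (1 - rexp (-x)) * x ^ (-a-1) ≤ x * x ^ (-a-1) :=
            mul_le_mul_of_nonneg_right aux_one_sub_exp_le (Real.rpow_nonneg hx0.le _)
        _ = x ^ (-a) := by
            rw [← Real.rpow_one_add' (le_of_lt hx0) (by intro h; simp at h; linarith)]; ring_nf
    · -- on Ioi 1, bound by x ^ (-a-1)
      have hg : IntegrableOn (fun x : ℝ => x ^ (-a-1)) (Ioi (1:ℝ)) :=
        integrableOn_Ioi_rpow_of_lt (by linarith) one_pos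
      apply Integrable.mono hg (hmeas _)
      filter_upwards [ae_restrict_mem measurableSet_Ioi] with x hx
      have hx0 : (0:ℝ) < x := lt_trans one_pos hx
      rw [Real.norm_eq_abs, Real.norm_eq_abs, abs_of_nonneg (Real.rpow_nonneg hx0.le _),
        abs_of_nonneg (mul_nonneg (by nlinarith [aux_exp_le_one hx0.le]) (Real.rpow_nonneg hx0.le _))]
      have : 1 - rexp (-x) ≤ 1 := by nlinarith [Real.exp_pos (-x)]
      nlinarith [Real.rpow_nonneg hx0.le (-a-1)]
  have h_zero : Tendsto (fun x => (1 - rexp (-x)) * (-x ^ (-a) / a)) (nhdsWithin 0 (Ioi (0:ℝ)))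
      (nhds 0) := by
    apply squeeze_zero_norm' (a := fun x => x ^ (1-a) / a)
    · filter_upwards [self_mem_nhdsWithin] with x (hx : (0:ℝ) < x)
      have h1e : 0 ≤ 1 - rexp (-x) := by nlinarith [aux_exp_le_one hx.le]
      rw [norm_mul, Real.norm_eq_abs, Real.norm_eq_abs, abs_of_nonneg h1e, abs_div,
        abs_neg, abs_of_nonneg (Real.rpow_nonneg hx.le _), abs_of_nonneg h0.le]
      have hnum : (1 - rexp (-x)) * x ^ (-a) ≤ x ^ (1-a) := by
        calc (1 - rexp (-x)) * x ^ (-a) ≤ x * x ^ (-a) :=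
              mul_le_mul_of_nonneg_right aux_one_sub_exp_le (Real.rpow_nonneg hx.le _)
          _ = x ^ (1-a) := by rw [← Real.rpow_one_add' (le_of_lt hx) (by intro h; linarith)]; ring_nf
      calc (1 - rexp (-x)) * (x ^ (-a) / a) = (1 - rexp (-x)) * x ^ (-a) / a := by ring
        _ ≤ x ^ (1 - a) / a := (div_le_div_iff_of_pos_right h0).mpr hnum
    · have : Tendsto (fun x : ℝ => x ^ (1-a)) (nhdsWithin 0 (Ioi (0:ℝ))) (nhds 0) := by
        have := (Real.continuousAt_rpow_const 0 (1-a) (Or.inr h1a.le)).continuousWithinAt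
          (s := Ioi (0:ℝ))
        simpa [Real.zero_rpow (ne_of_gt h1a), ContinuousWithinAt] using this
      simpa using this.div_const a
  have h_infty : Tendsto (fun x => (1 - rexp (-x)) * (-x ^ (-a) / a)) atTop (nhds 0) := by
    have t1 : Tendsto (fun x : ℝ => 1 - rexp (-x)) atTop (nhds 1) := by
      simpa using (Real.tendsto_exp_neg_atTop_nhds_zero).const_sub 1
    have t2 : Tendsto (fun x : ℝ => -x ^ (-a) / a) atTop (nhds 0) := by
      simpa using ((tendsto_rpow_neg_atTop h0).neg).div_const a
    simpa using t1.mul t2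
  have key := integral_Ioi_mul_deriv_eq_deriv_mul hu hv huv' hu'v h_zero h_infty
  rw [key]
  have : ∫ x in Ioi (0:ℝ), rexp (-x) * (-x ^ (-a) / a)
      = -a⁻¹ * Real.Gamma (1-a) := by
    rw [Real.Gamma_eq_integral h1a, ← integral_const_mul]
    apply setIntegral_congr_fun measurableSet_Ioi
    intro x hx
    rw [show (1:ℝ)-a-1 = -a by ring]; ring
  rw [this]; ring

lemma intJ_int {α : ℝ} (hα0 : 0 < α) (hα2 : α < 2) :
    IntegrableOn (fun t : ℝ => t ^ (α/2 - 1) * (1 - rexp (-(4*t)⁻¹))) (Ioi (0:ℝ)) := by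
  have hmeas : ∀ s : Set ℝ, AEStronglyMeasurable (fun t : ℝ => t ^ (α/2-1) * (1 - rexp (-(4*t)⁻¹)))
      (volume.restrict s) := by
    intro s
    apply Measurable.aestronglyMeasurable
    apply Measurable.mul
    · measurability
    · exact measurable_const.sub (((measurable_id.const_mul (4:ℝ)).inv.neg).exp)
  rw [← Ioc_union_Ioi_eq_Ioi (le_of_lt one_pos)]
  apply IntegrableOn.union
  · have hg : IntegrableOn (fun t : ℝ => t ^ (α/2-1)) (Ioc (0:ℝ) 1) := by
      rw [integrableOn_Ioc_iff_integrableOn_Ioo, intervalIntegral.integrableOn_Ioo_rpow_iff one_pos]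
      linarith
    apply Integrable.mono hg (hmeas _)
    filter_upwards [ae_restrict_mem measurableSet_Ioc] with t ht
    have ht0 : 0 < t := ht.1
    have hy : 0 ≤ (4*t)⁻¹ := by positivity
    have h1 : 0 ≤ 1 - rexp (-(4*t)⁻¹) := by nlinarith [aux_exp_le_one hy]
    have h2 : 1 - rexp (-(4*t)⁻¹) ≤ 1 := by nlinarith [Real.exp_pos (-(4*t)⁻¹)]
    rw [Real.norm_eq_abs, Real.norm_eq_abs, abs_of_nonneg (Real.rpow_nonneg ht0.le _),
      abs_of_nonneg (mul_nonneg (Real.rpow_nonneg ht0.le _) h1)]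
    nlinarith [Real.rpow_nonneg ht0.le (α/2-1)]
  · have hg : IntegrableOn (fun t : ℝ => t ^ (α/2-2)) (Ioi (1:ℝ)) :=
      integrableOn_Ioi_rpow_of_lt (by linarith) one_pos
    apply Integrable.mono hg (hmeas _)
    filter_upwards [ae_restrict_mem measurableSet_Ioi] with t ht
    have ht0 : (0:ℝ) < t := lt_trans one_pos ht
    have hy : 0 ≤ (4*t)⁻¹ := by positivity
    have h1 : 0 ≤ 1 - rexp (-(4*t)⁻¹) := by nlinarith [aux_exp_le_one hy]
    rw [Real.norm_eq_abs, Real.norm_eq_abs, abs_of_nonneg (Real.rpow_nonneg ht0.le _),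
      abs_of_nonneg (mul_nonneg (Real.rpow_nonneg ht0.le _) h1)]
    calc t ^ (α/2-1) * (1 - rexp (-(4*t)⁻¹)) ≤ t ^ (α/2-1) * t⁻¹ := by
          apply mul_le_mul_of_nonneg_left _ (Real.rpow_nonneg ht0.le _)
          calc 1 - rexp (-(4*t)⁻¹) ≤ (4*t)⁻¹ := aux_one_sub_exp_le
            _ ≤ t⁻¹ := by
                rw [mul_inv]
                nlinarith [inv_pos.mpr ht0]
      _ = t ^ (α/2-2) := by
          rw [← Real.rpow_neg_one t, ← Real.rpow_add ht0]
          congr 1; ring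
lemma intJ {α : ℝ} (hα0 : 0 < α) (hα2 : α < 2) :
    ∫ t in Ioi (0:ℝ), t ^ (α/2 - 1) * (1 - rexp (-(4*t)⁻¹))
      = (2:ℝ) ^ (-α) * (Real.Gamma (1 - α/2) / (α/2)) := by
  have hK := intK (a := α/2) (by positivity) (by linarith)
  have s1 : ∫ x in Ioi (0:ℝ), x ^ (α/2 - 1) * (1 - rexp (-x⁻¹))
      = Real.Gamma (1 - α/2) / (α/2) := by
    rw [← hK, ← integral_comp_rpow_Ioi (fun y => (1 - rexp (-y)) * y ^ (-(α/2) - 1))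
      (p := (-1:ℝ)) (by norm_num)]
    apply setIntegral_congr_fun measurableSet_Ioi
    intro x hx
    have hx0 : (0:ℝ) < x := hx
    dsimp only
    rw [abs_neg, abs_one, one_mul, smul_eq_mul, Real.rpow_neg_one,
      show (x⁻¹) ^ (-(α/2) - 1) = x ^ (α/2 + 1) from by
        rw [← Real.rpow_neg_one x, ← Real.rpow_mul hx0.le]
        congr 1; ring,
      show x ^ (α/2-1) = x ^ ((-1:ℝ)-1) * x ^ (α/2+1) from by
        rw [← Real.rpow_add hx0]; congr 1; ring]
    ring
  have s2 := integral_comp_mul_left_Ioi (fun x => x ^ (α/2-1) * (1 - rexp (-x⁻¹))) 0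
    (by norm_num : (0:ℝ) < 4)
  simp only [mul_zero, smul_eq_mul] at s2
  rw [s1] at s2
  have s3 : ∫ x in Ioi (0:ℝ), (4*x) ^ (α/2-1) * (1 - rexp (-(4*x)⁻¹))
      = (4:ℝ) ^ (α/2-1) * ∫ t in Ioi (0:ℝ), t ^ (α/2-1) * (1 - rexp (-(4*t)⁻¹)) := by
    rw [← integral_const_mul]
    apply setIntegral_congr_fun measurableSet_Ioi
    intro x hx
    dsimp only
    rw [Real.mul_rpow (by norm_num : (0:ℝ) ≤ 4) (le_of_lt hx)]
    ring
  rw [s3] at s2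
  have h24 : (4:ℝ) ^ (-(α/2)) = 2 ^ (-α) := by
    have h42 : (4:ℝ) = 2 ^ (2:ℝ) := by
      rw [show (2:ℝ) = ((2:ℕ):ℝ) from by norm_num, Real.rpow_natCast]; norm_num
    rw [h42, ← Real.rpow_mul (by norm_num)]
    congr 1; ring
  have hmain : (2:ℝ) ^ (-α) = ((4:ℝ)^(α/2-1))⁻¹ * 4⁻¹ := by
    have h44 : (4:ℝ)^(α/2-1) * 4 = 4^(α/2) := by
      nth_rewrite 2 [show (4:ℝ) = 4^(1:ℝ) from (Real.rpow_one 4).symm]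
      rw [← Real.rpow_add (by norm_num)]; congr 1; ring
    rw [← mul_inv, h44, ← Real.rpow_neg (by norm_num : (0:ℝ) ≤ 4), h24]
  have h4 : ((4:ℝ)^(α/2-1)) ≠ 0 := (Real.rpow_pos_of_pos (by norm_num) _).ne'
  calc ∫ t in Ioi (0:ℝ), t ^ (α/2-1) * (1 - rexp (-(4*t)⁻¹))
      = ((4:ℝ)^(α/2-1))⁻¹ * ((4:ℝ)^(α/2-1) * ∫ t in Ioi (0:ℝ), t ^ (α/2-1) * (1 - rexp (-(4*t)⁻¹))) := by
        rw [← mul_assoc, inv_mul_cancel₀ h4, one_mul]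
    _ = ((4:ℝ)^(α/2-1))⁻¹ * (4⁻¹ * (Real.Gamma (1 - α/2) / (α/2))) := by rw [s2]
    _ = (2:ℝ) ^ (-α) * (Real.Gamma (1 - α/2) / (α/2)) := by rw [hmain]; ring

lemma gauss_cos_integrable (d : ℕ) (hd : 0 < d) {t : ℝ} (ht : 0 < t) :
    Integrable (fun z : EuclideanSpace ℝ (Fin d) =>
      (1 - Real.cos (z ⟨0, hd⟩)) * rexp (-t * ‖z‖ ^ 2)) := by
  have htc : (0:ℝ) < (Complex.ofReal t).re := by simpa using ht
  have hIc : Integrable (fun v : EuclideanSpace ℝ (Fin d) =>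
      Complex.exp (-(t:ℂ) * (‖v‖:ℂ)^2 + Complex.I * ((⟪EuclideanSpace.single ⟨0, hd⟩ (1:ℝ), v⟫ : ℝ) : ℂ))) :=
    GaussianFourier.integrable_cexp_neg_mul_sq_norm_add htc Complex.I _
  have hinner : ∀ v : EuclideanSpace ℝ (Fin d),
      (⟪EuclideanSpace.single ⟨0, hd⟩ (1:ℝ), v⟫ : ℝ) = v ⟨0, hd⟩ := by
    intro v; rw [EuclideanSpace.inner_single_left]; simp
  have hre : ∀ v : EuclideanSpace ℝ (Fin d),
      (Complex.exp (-(t:ℂ) * (‖v‖:ℂ)^2 + Complex.I * ((⟪EuclideanSpace.single ⟨0, hd⟩ (1:ℝ), v⟫ : ℝ) : ℂ))).re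
      = Real.cos (v ⟨0, hd⟩) * rexp (-t * ‖v‖ ^ 2) := by
    intro v
    rw [Complex.exp_re]
    simp [hinner v, ← Complex.ofReal_pow, mul_comm]
  have hI2 : Integrable (fun v : EuclideanSpace ℝ (Fin d) =>
      Real.cos (v ⟨0, hd⟩) * rexp (-t * ‖v‖ ^ 2)) := by
    have := hIc.re
    simp only [RCLike.re_to_complex] at this
    simpa only [hre] using this
  have hI1 : Integrable (fun v : EuclideanSpace ℝ (Fin d) => rexp (-t * ‖v‖ ^ 2)) := by
    have := (GaussianFourier.integrable_cexp_neg_mul_sq_norm_add htc 0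
      (0 : EuclideanSpace ℝ (Fin d))).re
    apply Integrable.congr this
    filter_upwards with v
    simp only [RCLike.re_to_complex]
    rw [Complex.exp_re]
    simp [← Complex.ofReal_pow]
  apply (hI1.sub hI2).congr
  filter_upwards with v
  simp only [Pi.sub_apply]
  ring


lemma gauss_cos (d : ℕ) (hd : 0 < d) {t : ℝ} (ht : 0 < t) :
    ∫ z : EuclideanSpace ℝ (Fin d), (1 - Real.cos (z ⟨0, hd⟩)) * rexp (-t * ‖z‖ ^ 2)
      = (π / t) ^ ((d : ℝ) / 2) * (1 - rexp (-(4 * t)⁻¹)) := by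
  have htc : (0:ℝ) < (Complex.ofReal t).re := by simpa using ht
  have hIc : Integrable (fun v : EuclideanSpace ℝ (Fin d) =>
      Complex.exp (-(t:ℂ) * (‖v‖:ℂ)^2 + Complex.I * ((⟪EuclideanSpace.single ⟨0, hd⟩ (1:ℝ), v⟫ : ℝ) : ℂ))) :=
    GaussianFourier.integrable_cexp_neg_mul_sq_norm_add htc Complex.I _
  have hinner : ∀ v : EuclideanSpace ℝ (Fin d),
      (⟪EuclideanSpace.single ⟨0, hd⟩ (1:ℝ), v⟫ : ℝ) = v ⟨0, hd⟩ := by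
    intro v; rw [EuclideanSpace.inner_single_left]; simp
  have hre : ∀ v : EuclideanSpace ℝ (Fin d),
      (Complex.exp (-(t:ℂ) * (‖v‖:ℂ)^2 + Complex.I * ((⟪EuclideanSpace.single ⟨0, hd⟩ (1:ℝ), v⟫ : ℝ) : ℂ))).re
      = Real.cos (v ⟨0, hd⟩) * rexp (-t * ‖v‖ ^ 2) := by
    intro v
    rw [Complex.exp_re]
    simp [hinner v, ← Complex.ofReal_pow, mul_comm]
  have hI2 : Integrable (fun v : EuclideanSpace ℝ (Fin d) =>
      Real.cos (v ⟨0, hd⟩) * rexp (-t * ‖v‖ ^ 2)) := by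
    have := hIc.re
    simp only [RCLike.re_to_complex] at this
    simpa only [hre] using this
  have hI1 : Integrable (fun v : EuclideanSpace ℝ (Fin d) => rexp (-t * ‖v‖ ^ 2)) := by
    have := (GaussianFourier.integrable_cexp_neg_mul_sq_norm_add htc 0
      (0 : EuclideanSpace ℝ (Fin d))).re
    apply Integrable.congr this
    filter_upwards with v
    simp only [RCLike.re_to_complex]
    rw [Complex.exp_re]
    simp [← Complex.ofReal_pow]
  have G1 : ∫ v : EuclideanSpace ℝ (Fin d), rexp (-t * ‖v‖ ^ 2) = (π / t) ^ ((d:ℝ) / 2) := by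
    have := GaussianFourier.integral_rexp_neg_mul_sq_norm (V := EuclideanSpace ℝ (Fin d)) ht
    simpa [finrank_euclideanSpace_fin] using this
  have G2 : ∫ v : EuclideanSpace ℝ (Fin d), Real.cos (v ⟨0, hd⟩) * rexp (-t * ‖v‖ ^ 2)
      = (π / t) ^ ((d:ℝ) / 2) * rexp (-(4 * t)⁻¹) := by
    have key := GaussianFourier.integral_cexp_neg_mul_sq_norm_add
      (V := EuclideanSpace ℝ (Fin d)) htc Complex.I (EuclideanSpace.single ⟨0, hd⟩ (1:ℝ))
    have hwn : ‖EuclideanSpace.single (⟨0, hd⟩ : Fin d) (1:ℝ)‖ = 1 := by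
      rw [EuclideanSpace.norm_single]; simp
    have h3 := integral_re hIc
    simp only [RCLike.re_to_complex] at h3
    simp only [hre] at h3
    rw [h3, key, hwn, finrank_euclideanSpace_fin]
    have h1 : ((π : ℂ) / t) ^ (((d:ℕ) : ℂ) / 2) = ((((π / t) ^ ((d:ℝ)/2)) : ℝ) : ℂ) := by
      rw [← Complex.ofReal_div, Complex.ofReal_cpow (by positivity)]
      norm_num
    have h2 : (Complex.I ^ 2 * ((1:ℝ):ℂ) ^ 2 / (4 * (t:ℂ))) = (((-(4*t)⁻¹ : ℝ)) : ℂ) := by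
      rw [Complex.I_sq]
      push_cast
      ring
    rw [h1, h2, ← Complex.ofReal_exp, ← Complex.ofReal_mul, Complex.ofReal_re]
  have split : ∫ v : EuclideanSpace ℝ (Fin d), (1 - Real.cos (v ⟨0, hd⟩)) * rexp (-t * ‖v‖ ^ 2)
      = (∫ v : EuclideanSpace ℝ (Fin d), rexp (-t * ‖v‖ ^ 2))
        - ∫ v : EuclideanSpace ℝ (Fin d), Real.cos (v ⟨0, hd⟩) * rexp (-t * ‖v‖ ^ 2) := by
    rw [← integral_sub hI1 hI2]
    congr 1; funext v; ring
  rw [split, G1, G2]; ring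

/-- For every dimension `d ≥ 1` and every `α ∈ (0,2)`, the constant
`c₀(d,α) := ∫_{ℝ^d} (1 − cos z₁)/|z|^{d+α} dz` equals
`π^{d/2}·|Γ(−α/2)| / (2^α · Γ((d+α)/2))`, where `Γ` is the Gamma function. -/
theorem stmt_1 (d : ℕ) (hd : 0 < d) (α : ℝ) (hα0 : 0 < α) (hα2 : α < 2) :
    (∫ z : EuclideanSpace ℝ (Fin d), (1 - Real.cos (z ⟨0, hd⟩)) / ‖z‖ ^ ((d : ℝ) + α)) =
      Real.pi ^ ((d : ℝ) / 2) * |Real.Gamma (-α / 2)| /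
        (2 ^ α * Real.Gamma (((d : ℝ) + α) / 2)) := by
  have hd1 : (1:ℝ) ≤ (d:ℝ) := by exact_mod_cast hd
  set s : ℝ := ((d:ℝ) + α) / 2 with hs_def
  have hs : 0 < s := by positivity
  have hΓs : 0 < Real.Gamma s := Real.Gamma_pos_of_pos hs
  have hΓK : 0 < Real.Gamma (1 - α/2) := Real.Gamma_pos_of_pos (by linarith)
  have hcos_nonneg : ∀ x : ℝ, 0 ≤ 1 - Real.cos x := fun x => by nlinarith [Real.cos_le_one x]
  set i0 : Fin d := ⟨0, hd⟩ with hi0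
  set f : EuclideanSpace ℝ (Fin d) → ℝ :=
    fun z => (1 - Real.cos (z i0)) / ‖z‖ ^ ((d:ℝ) + α) with hf_def
  set g : EuclideanSpace ℝ (Fin d) → ℝ → ℝ :=
    fun z t => (1 - Real.cos (z i0)) * (t ^ (s-1) * rexp (-(‖z‖^2 * t))) with hg_def
  have hf_nonneg : ∀ z, 0 ≤ f z := fun z =>
    div_nonneg (hcos_nonneg _) (Real.rpow_nonneg (norm_nonneg z) _)
  have hf_meas : Measurable f :=
    (measurable_const.sub ((measurable_pi_apply i0).comp (WithLp.measurable_ofLp 2 (Fin d → ℝ))).cos).div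
      ((meas_rpow_aux ((d:ℝ)+α)).comp measurable_norm)
  -- rewrite the goal using f
  rw [show (∫ z : EuclideanSpace ℝ (Fin d), (1 - Real.cos (z i0)) / ‖z‖ ^ ((d : ℝ) + α)) = ∫ z, f z from rfl]
  rw [integral_eq_lintegral_of_nonneg_ae (Eventually.of_forall hf_nonneg)
    hf_meas.aestronglyMeasurable]
  -- a.e. z is nonzero
  have h0 : ∀ᵐ z : EuclideanSpace ℝ (Fin d) ∂volume, z ≠ 0 := by
    haveI : Nonempty (Fin d) := ⟨i0⟩
    refine ae_iff.mpr ?_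
    simpa [not_not, Set.setOf_eq_eq_singleton]
      using measure_singleton (0 : EuclideanSpace ℝ (Fin d))
  -- step 1 : subordination
  have claim1 : ∀ᵐ z : EuclideanSpace ℝ (Fin d) ∂volume, ENNReal.ofReal (f z)
      = (ENNReal.ofReal (Real.Gamma s))⁻¹ * ∫⁻ t in Ioi (0:ℝ), ENNReal.ofReal (g z t) := by
    filter_upwards [h0] with z hz
    have hzn : 0 < ‖z‖ := norm_pos_iff.mpr hz
    have hr : 0 < ‖z‖^2 := by positivity
    have hint : IntegrableOn (fun t : ℝ => t ^ (s-1) * rexp (-(‖z‖^2 * t))) (Ioi (0:ℝ)) := by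
      have h := integrableOn_rpow_mul_exp_neg_mul_rpow (s := s-1) (p := 1)
        (by linarith) one_pos hr
      apply h.congr_fun ?_ measurableSet_Ioi
      intro t ht
      dsimp only
      rw [Real.rpow_one, neg_mul]
    have hint2 : IntegrableOn (fun t => g z t) (Ioi (0:ℝ)) := hint.const_mul _
    have hB := integral_rpow_mul_exp_neg_mul_Ioi hs hr
    have hpow : ((1:ℝ)/(‖z‖^2))^s = (‖z‖ ^ ((d:ℝ)+α))⁻¹ := by
      rw [one_div, ← Real.rpow_natCast ‖z‖ 2, ← Real.rpow_neg (norm_nonneg z),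
        ← Real.rpow_mul (norm_nonneg z),
        show (-(((2:ℕ):ℝ))*s) = -((d:ℝ)+α) from by rw [hs_def]; push_cast; ring,
        Real.rpow_neg (norm_nonneg z)]
    have hval : ∫ t in Ioi (0:ℝ), g z t = Real.Gamma s * f z := by
      rw [hg_def]
      dsimp only
      rw [integral_const_mul, hB, hpow, hf_def]
      dsimp only
      rw [div_eq_mul_inv]
      ring
    have hofReal := ofReal_integral_eq_lintegral_ofReal hint2
      ((ae_restrict_iff' measurableSet_Ioi).mpr (Eventually.of_forall fun t ht =>
        mul_nonneg (hcos_nonneg _)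
          (mul_nonneg (Real.rpow_nonneg (le_of_lt ht) _) (Real.exp_nonneg _))))
    rw [← hofReal, hval, ENNReal.ofReal_mul hΓs.le, ← mul_assoc,
      ENNReal.inv_mul_cancel (ENNReal.ofReal_pos.mpr hΓs).ne' ENNReal.ofReal_ne_top, one_mul]
  rw [lintegral_congr_ae claim1,
    lintegral_const_mul' _ _ (ENNReal.inv_ne_top.mpr (ENNReal.ofReal_pos.mpr hΓs).ne')]
  -- step 2 : Tonelli
  have hswap : (∫⁻ z : EuclideanSpace ℝ (Fin d), ∫⁻ t in Ioi (0:ℝ), ENNReal.ofReal (g z t))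
      = ∫⁻ t in Ioi (0:ℝ), ∫⁻ z : EuclideanSpace ℝ (Fin d), ENNReal.ofReal (g z t) := by
    apply lintegral_lintegral_swap
    apply Measurable.aemeasurable
    apply Measurable.ennreal_ofReal
    rw [hg_def]
    apply Measurable.mul
    · exact (measurable_const.sub (((measurable_pi_apply i0).comp (WithLp.measurable_ofLp 2 (Fin d → ℝ))).comp measurable_fst).cos)
    · exact ((meas_rpow_aux (s-1)).comp measurable_snd).mul
        ((((measurable_fst.norm.pow_const 2).mul measurable_snd).neg).exp)
  rw [hswap]
  -- step 3 : Gaussian integral for fixed t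
  have hinner : ∀ᵐ t ∂(volume.restrict (Ioi (0:ℝ))),
      (∫⁻ z : EuclideanSpace ℝ (Fin d), ENNReal.ofReal (g z t))
      = ENNReal.ofReal (t^(s-1) * ((π/t)^((d:ℝ)/2) * (1 - rexp (-(4*t)⁻¹)))) := by
    refine (ae_restrict_iff' measurableSet_Ioi).mpr (Eventually.of_forall fun t ht => ?_)
    have ht0 : (0:ℝ) < t := ht
    have hti := gauss_cos_integrable d hd ht0
    have htg : Integrable (fun z => g z t) := by
      apply (hti.const_mul (t^(s-1))).congr
      filter_upwards with z
      rw [hg_def]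
      dsimp only
      rw [mul_comm (‖z‖^2) t]
      rw [hi0]
      ring
    rw [← ofReal_integral_eq_lintegral_ofReal htg
      (Eventually.of_forall fun z => mul_nonneg (hcos_nonneg _)
        (mul_nonneg (Real.rpow_nonneg ht0.le _) (Real.exp_nonneg _)))]
    congr 1
    calc ∫ z : EuclideanSpace ℝ (Fin d), g z t
        = ∫ z : EuclideanSpace ℝ (Fin d),
            t^(s-1) * ((1 - Real.cos (z i0)) * rexp (-t * ‖z‖^2)) := by
          congr 1; funext z; rw [hg_def]; dsimp only; rw [mul_comm (‖z‖^2) t]; ring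
      _ = t^(s-1) * ((π/t)^((d:ℝ)/2) * (1 - rexp (-(4*t)⁻¹))) := by
          rw [integral_const_mul, gauss_cos d hd ht0]
  rw [lintegral_congr_ae hinner]
  -- step 4 : evaluate the t-integral
  have hpt : ∀ t ∈ Ioi (0:ℝ), t^(s-1) * ((π/t)^((d:ℝ)/2) * (1 - rexp (-(4*t)⁻¹)))
      = π ^ ((d:ℝ)/2) * (t^(α/2-1) * (1 - rexp (-(4*t)⁻¹))) := by
    intro t ht
    have ht0 : (0:ℝ) < t := ht
    have hexp : t^(s-1) * t^(-((d:ℝ)/2)) = t^(α/2-1) := by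
      rw [← Real.rpow_add ht0]; congr 1; rw [hs_def]; ring
    calc t^(s-1) * ((π/t)^((d:ℝ)/2) * (1 - rexp (-(4*t)⁻¹)))
        = (t^(s-1) * t^(-((d:ℝ)/2))) * (π^((d:ℝ)/2) * (1 - rexp (-(4*t)⁻¹))) := by
          rw [Real.div_rpow Real.pi_pos.le ht0.le, div_eq_mul_inv,
            ← Real.rpow_neg ht0.le]
          ring
      _ = π ^ ((d:ℝ)/2) * (t^(α/2-1) * (1 - rexp (-(4*t)⁻¹))) := by rw [hexp]; ring
  have hAint : IntegrableOn
      (fun t => t^(s-1) * ((π/t)^((d:ℝ)/2) * (1 - rexp (-(4*t)⁻¹)))) (Ioi (0:ℝ)) := by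
    exact IntegrableOn.congr_fun (Integrable.const_mul (intJ_int hα0 hα2) (π ^ ((d:ℝ)/2)))
      (fun t ht => (hpt t ht).symm) measurableSet_Ioi
  have hA_nonneg : ∀ᵐ t ∂(volume.restrict (Ioi (0:ℝ))),
      0 ≤ t^(s-1) * ((π/t)^((d:ℝ)/2) * (1 - rexp (-(4*t)⁻¹))) := by
    refine (ae_restrict_iff' measurableSet_Ioi).mpr (Eventually.of_forall fun t ht => ?_)
    have ht0 : (0:ℝ) < t := ht
    have : 0 ≤ 1 - rexp (-(4*t)⁻¹) := by
      nlinarith [aux_exp_le_one (by positivity : (0:ℝ) ≤ (4*t)⁻¹)]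
    have h1 : (0:ℝ) ≤ (π/t)^((d:ℝ)/2) := Real.rpow_nonneg (by positivity) _
    have h2 : (0:ℝ) ≤ t^(s-1) := Real.rpow_nonneg ht0.le _
    positivity
  rw [← ofReal_integral_eq_lintegral_ofReal hAint hA_nonneg]
  have hAval : ∫ t in Ioi (0:ℝ), t^(s-1) * ((π/t)^((d:ℝ)/2) * (1 - rexp (-(4*t)⁻¹)))
      = π ^ ((d:ℝ)/2) * ((2:ℝ)^(-α) * (Real.Gamma (1 - α/2) / (α/2))) := by
    rw [setIntegral_congr_fun measurableSet_Ioi hpt, integral_const_mul, intJ hα0 hα2]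
  rw [hAval]
  -- final arithmetic
  have habs : |Real.Gamma (-α/2)| = Real.Gamma (1 - α/2) / (α/2) := by
    have hα : α ≠ 0 := hα0.ne'
    have hne : (-α/2 : ℝ) ≠ 0 := by
      intro h; apply hα; linarith [h]
    have h1 := Real.Gamma_add_one hne
    have h2 : Real.Gamma (-α/2) = -(Real.Gamma (1 - α/2) / (α/2)) := by
      have hrw : (1:ℝ) - α/2 = -α/2 + 1 := by ring
      rw [hrw, h1]
      field_simp
    rw [h2, abs_neg, abs_of_nonneg (div_nonneg hΓK.le (by linarith))]
  have hval_nonneg : (0:ℝ) ≤ (Real.Gamma s)⁻¹ *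
      (π ^ ((d:ℝ)/2) * ((2:ℝ)^(-α) * (Real.Gamma (1 - α/2) / (α/2)))) :=
    mul_nonneg (inv_nonneg.mpr hΓs.le)
      (mul_nonneg (Real.rpow_nonneg Real.pi_pos.le _)
        (mul_nonneg (Real.rpow_nonneg (by norm_num) _)
          (div_nonneg hΓK.le (by linarith))))
  rw [← ENNReal.ofReal_inv_of_pos hΓs,
    ← ENNReal.ofReal_mul (inv_nonneg.mpr hΓs.le),
    ENNReal.toReal_ofReal hval_nonneg]
  rw [habs, Real.rpow_neg (by norm_num : (0:ℝ) ≤ 2)]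
  have h2α : ((2:ℝ)^α) ≠ 0 := (Real.rpow_pos_of_pos (by norm_num) α).ne'
  rw [eq_div_iff (mul_ne_zero h2α hΓs.ne')]
  field_simp
end

section
/- Let d ≥ 1, 0 < α < 2, and let μ : ℝ^d × ℝ^d → ℝ be measurable with μ(x,y) ≥ μ₋ > 0 for all x,y. If u : ℝ^d → ℂ is ℤ^d-periodic with u|_Ω ∈ L²(Ω) (Ω = [0,1)^d) and (1/2) ∫_{ℝ^d} dy ∫_Ω dx μ(x,y) |u(x) − u(y)|² / |x − y|^{d+α} = 0, then u is equal to a constant almost everywhere on ℝ^d. -/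
open MeasureTheory Real
open scoped ENNReal

lemma euclidean_volume_singleton (d : ℕ) (hd : 0 < d) (y : EuclideanSpace ℝ (Fin d)) :
    volume ({y} : Set (EuclideanSpace ℝ (Fin d))) = 0 := by
  have h := (EuclideanSpace.volume_preserving_symm_measurableEquiv_toLp (Fin d)).measure_preimage
    (s := {(MeasurableEquiv.toLp 2 (Fin d → ℝ)).symm y}) (measurableSet_singleton _).nullMeasurableSet
  have he : ({y} : Set (EuclideanSpace ℝ (Fin d))) =
      (MeasurableEquiv.toLp 2 (Fin d → ℝ)).symm ⁻¹' {(MeasurableEquiv.toLp 2 (Fin d → ℝ)).symm y} := by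
    ext z
    simp only [Set.mem_preimage, Set.mem_singleton_iff]
    exact ⟨fun h => by rw [h], fun h => (MeasurableEquiv.toLp 2 (Fin d → ℝ)).symm.injective h⟩
  rw [he, h]
  have h2 : ({(MeasurableEquiv.toLp 2 (Fin d → ℝ)).symm y} : Set (Fin d → ℝ)) =
      Set.pi Set.univ (fun i => {y i}) := by
    ext z; simp [funext_iff, MeasurableEquiv.toLp_symm_apply]
  rw [h2, volume_pi_pi]
  simp
  omega

lemma euclidean_cell_eq (d : ℕ) :
    {x : EuclideanSpace ℝ (Fin d) | ∀ i, 0 ≤ x i ∧ x i < 1} =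
      (MeasurableEquiv.toLp 2 (Fin d → ℝ)).symm ⁻¹' (Set.pi Set.univ (fun _ => Set.Ico (0:ℝ) 1)) := by
  ext z; simp [MeasurableEquiv.toLp_symm_apply, Set.mem_pi]

lemma euclidean_cell_measurable (d : ℕ) :
    MeasurableSet {x : EuclideanSpace ℝ (Fin d) | ∀ i, 0 ≤ x i ∧ x i < 1} := by
  rw [euclidean_cell_eq]
  exact (MeasurableEquiv.toLp 2 (Fin d → ℝ)).symm.measurable
    (MeasurableSet.univ_pi (fun _ => measurableSet_Ico))

lemma euclidean_cell_volume (d : ℕ) :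
    volume {x : EuclideanSpace ℝ (Fin d) | ∀ i, 0 ≤ x i ∧ x i < 1} = 1 := by
  have h := (EuclideanSpace.volume_preserving_symm_measurableEquiv_toLp (Fin d)).measure_preimage
    (s := Set.pi Set.univ (fun _ => Set.Ico (0:ℝ) 1))
    (MeasurableSet.univ_pi (fun _ => measurableSet_Ico)).nullMeasurableSet
  rw [euclidean_cell_eq, h, volume_pi_pi]; simp

/-- If `μ(x,y) ≥ μ₋ > 0` is measurable, `u` is `ℤ^d`-periodic with
`u|_Ω ∈ L²(Ω)` and `(1/2) ∫_{ℝ^d} dy ∫_Ω dx μ(x,y)|u(x) − u(y)|²/|x−y|^{d+α} = 0`,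
then `u` is a.e. equal to a constant on `ℝ^d`. -/
theorem stmt_5 (d : ℕ) (hd : 0 < d) (α : ℝ) (hα0 : 0 < α) (hα2 : α < 2)
    (μ : EuclideanSpace ℝ (Fin d) → EuclideanSpace ℝ (Fin d) → ℝ)
    (hμmeas : Measurable fun p : EuclideanSpace ℝ (Fin d) × EuclideanSpace ℝ (Fin d) => μ p.1 p.2)
    (μm : ℝ) (hμm : 0 < μm) (hlb : ∀ x y, μm ≤ μ x y)
    (u : EuclideanSpace ℝ (Fin d) → ℂ)
    (hper : ∀ (x : EuclideanSpace ℝ (Fin d)) (n : Fin d → ℤ),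
      u (x + (WithLp.equiv 2 (Fin d → ℝ)).symm (fun i => (n i : ℝ))) = u x)
    (hu : MemLp u 2 (volume.restrict {x : EuclideanSpace ℝ (Fin d) | ∀ i, 0 ≤ x i ∧ x i < 1}))
    (hzero : (1 / 2 : ℝ≥0∞) * (∫⁻ y : EuclideanSpace ℝ (Fin d),
        ∫⁻ x in {x : EuclideanSpace ℝ (Fin d) | ∀ i, 0 ≤ x i ∧ x i < 1},
          ENNReal.ofReal (μ x y * ‖u x - u y‖ ^ 2 / ‖x - y‖ ^ ((d : ℝ) + α))) = 0) :
    ∃ c : ℂ, ∀ᵐ x : EuclideanSpace ℝ (Fin d), u x = c := by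
  set Ω : Set (EuclideanSpace ℝ (Fin d)) :=
    {x : EuclideanSpace ℝ (Fin d) | ∀ i, 0 ≤ x i ∧ x i < 1} with hΩ
  have hΩmeas : MeasurableSet Ω := euclidean_cell_measurable d
  have hΩvol : volume Ω = 1 := euclidean_cell_volume d
  -- the fractional-part (fundamental domain) map
  set Fr : EuclideanSpace ℝ (Fin d) → EuclideanSpace ℝ (Fin d) := fun x => (WithLp.equiv 2 (Fin d → ℝ)).symm (fun i => Int.fract (x i)) with hFr
  have hFrmeas : Measurable Fr :=
    (MeasurableEquiv.toLp 2 (Fin d → ℝ)).symm.symm.measurable.comp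
      (measurable_pi_lambda _ (fun i => measurable_fract.comp
        ((measurable_pi_apply i).comp (MeasurableEquiv.toLp 2 (Fin d → ℝ)).symm.measurable)))
  have hFrΩ : ∀ x, Fr x ∈ Ω := fun x i => ⟨Int.fract_nonneg _, Int.fract_lt_one _⟩
  have huFr : ∀ x, u (Fr x) = u x := by
    intro x
    have hsum : Fr x + (WithLp.equiv 2 (Fin d → ℝ)).symm (fun i => ((⌊x i⌋ : ℤ) : ℝ)) = x := by
      ext i
      show Int.fract (x i) + (⌊x i⌋ : ℝ) = x i
      rw [Int.fract]; ring
    have := hper (Fr x) (fun i => ⌊x i⌋)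
    rw [hsum] at this
    exact this.symm
  -- measurable modification of u
  set g : EuclideanSpace ℝ (Fin d) → ℂ := hu.aestronglyMeasurable.mk u with hgdef
  have hg : StronglyMeasurable g := hu.aestronglyMeasurable.stronglyMeasurable_mk
  have hug : u =ᵐ[volume.restrict Ω] g := hu.aestronglyMeasurable.ae_eq_mk
  set N : Set (EuclideanSpace ℝ (Fin d)) := {x | x ∈ Ω ∧ u x ≠ g x} with hNdef
  have hN : volume N = 0 := by
    have h := (ae_restrict_iff' hΩmeas).mp hug
    rw [ae_iff] at h
    refine measure_mono_null ?_ h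
    intro x hx
    simp only [Set.mem_setOf_eq] at hx ⊢
    exact fun hcon => hx.2 (hcon hx.1)
  set G : EuclideanSpace ℝ (Fin d) → ℂ := fun x => g (Fr x) with hGdef
  have hG : Measurable G := hg.measurable.comp hFrmeas
  -- u = G a.e.
  have huG : u =ᵐ[volume] G := by
    rw [Filter.EventuallyEq, ae_iff]
    have hsub : {x : EuclideanSpace ℝ (Fin d) | ¬ u x = G x} ⊆
        ⋃ n : Fin d → ℤ, (fun x : EuclideanSpace ℝ (Fin d) => x + (WithLp.equiv 2 (Fin d → ℝ)).symm
          (fun i => ((n i : ℤ) : ℝ))) ⁻¹' N := by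
      intro x hx
      simp only [Set.mem_setOf_eq] at hx
      refine Set.mem_iUnion.mpr ⟨fun i => -⌊x i⌋, ?_⟩
      have hxe : x + (WithLp.equiv 2 (Fin d → ℝ)).symm (fun i => (((-⌊x i⌋ : ℤ)) : ℝ)) = Fr x := by
        ext i
        show x i + ((-⌊x i⌋ : ℤ) : ℝ) = Int.fract (x i)
        rw [Int.fract]; push_cast; ring
      show x + _ ∈ N
      rw [hxe]
      exact ⟨hFrΩ x, fun hcon => hx (by rw [← huFr x, hcon])⟩
    refine measure_mono_null hsub (measure_iUnion_null fun n => ?_)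
    rw [measure_preimage_add_right]
    exact hN
  -- the energy with u replaced by G
  set F : EuclideanSpace ℝ (Fin d) × EuclideanSpace ℝ (Fin d) → ℝ≥0∞ := fun p =>
    ENNReal.ofReal (μ p.2 p.1 * ‖G p.2 - G p.1‖ ^ 2 / ‖p.2 - p.1‖ ^ ((d : ℝ) + α)) with hFdef
  have hF : Measurable F := by
    refine ENNReal.measurable_ofReal.comp (Measurable.div (Measurable.mul ?_ ?_) ?_)
    · exact hμmeas.comp measurable_swap
    · exact (((hG.comp measurable_snd).sub (hG.comp measurable_fst)).norm).pow_const 2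
    · exact ((measurable_snd.sub measurable_fst).norm).pow measurable_const
  have h2 : (∫⁻ y : EuclideanSpace ℝ (Fin d), ∫⁻ x in Ω,
      ENNReal.ofReal (μ x y * ‖u x - u y‖ ^ 2 / ‖x - y‖ ^ ((d : ℝ) + α))) = 0 := by
    rcases mul_eq_zero.mp hzero with h | h
    · exfalso; simp at h
    · exact h
  have hGzero : (∫⁻ y : EuclideanSpace ℝ (Fin d), ∫⁻ x in Ω, F (y, x)) = 0 := by
    rw [← h2]
    refine lintegral_congr_ae ?_
    filter_upwards [huG] with y hy
    refine lintegral_congr_ae ?_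
    filter_upwards [ae_restrict_of_ae huG] with x hx
    simp only [hFdef, hx, hy]
  have hFy : Measurable fun y : EuclideanSpace ℝ (Fin d) => ∫⁻ x in Ω, F (y, x) := hF.lintegral_prod_right'
  have h3 : ∀ᵐ y : EuclideanSpace ℝ (Fin d), (∫⁻ x in Ω, F (y, x)) = 0 := by
    have := (lintegral_eq_zero_iff hFy).mp hGzero
    filter_upwards [this] with y hy using hy
  -- a.e. y, a.e. x ∈ Ω : G x = G y
  have hP : ∀ᵐ y : EuclideanSpace ℝ (Fin d), ∀ᵐ x ∂(volume.restrict Ω), G x = G y := by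
    filter_upwards [h3] with y hy
    have h4 : ∀ᵐ x ∂(volume.restrict Ω), F (y, x) = 0 := by
      have := (lintegral_eq_zero_iff (hF.comp (measurable_prodMk_left))).mp hy
      filter_upwards [this] with x hx using hx
    have h5 : ∀ᵐ x ∂(volume.restrict Ω), x ≠ y := by
      rw [ae_iff]
      have hset : {x : EuclideanSpace ℝ (Fin d) | ¬ x ≠ y} = {y} := by ext z; simp
      rw [hset, Measure.restrict_apply (measurableSet_singleton y)]
      exact measure_mono_null Set.inter_subset_left (euclidean_volume_singleton d hd y)
    filter_upwards [h4, h5] with x hx hxy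
    by_contra hne
    have hs : 0 < ‖G x - G y‖ ^ 2 := pow_pos (norm_pos_iff.mpr (sub_ne_zero.mpr hne)) 2
    have ht : 0 < ‖x - y‖ ^ ((d : ℝ) + α) :=
      Real.rpow_pos_of_pos (norm_pos_iff.mpr (sub_ne_zero.mpr hxy)) _
    have hr : 0 < μ x y * ‖G x - G y‖ ^ 2 / ‖x - y‖ ^ ((d : ℝ) + α) :=
      div_pos (mul_pos (lt_of_lt_of_le hμm (hlb x y)) hs) ht
    have := ENNReal.ofReal_eq_zero.mp hx
    simp only [hFdef] at this
    linarith
  -- conclude constancy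
  have hν : volume.restrict Ω ≠ 0 := by
    intro h
    have : volume Ω = 0 := by
      have := congrArg (fun m : Measure (EuclideanSpace ℝ (Fin d)) => m Set.univ) h
      simpa [Measure.restrict_apply_univ] using this
    rw [hΩvol] at this; exact one_ne_zero this
  have hvol : (volume : Measure (EuclideanSpace ℝ (Fin d))) ≠ 0 := by
    intro h
    have : volume Ω = 0 := by rw [h]; rfl
    rw [hΩvol] at this; exact one_ne_zero this
  haveI : (ae (volume : Measure (EuclideanSpace ℝ (Fin d)))).NeBot := ae_neBot.mpr hvol
  haveI : (ae (volume.restrict Ω)).NeBot := ae_neBot.mpr hν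
  obtain ⟨y₀, hy₀⟩ := hP.exists
  refine ⟨G y₀, ?_⟩
  filter_upwards [hP, huG] with y hy hyu
  obtain ⟨x, h1', h2'⟩ := (hy.and hy₀).exists
  rw [hyu, ← h1', h2']
end
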